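/- If (X, ξ) is a T₁ convergence space (every singleton is closed) and A is a nonempty connected subset, then the enclosure e(A) = { x : A ∪ {x} is connected } equals adh_ξ A. In particular, cl_ξ A encloses A if and only if adh_ξ A = cl_ξ A. -/

import Mathlib

open Filter Set

/-- A convergence structure on `X`: a relation between points and (proper) filters,
such that every principal ultrafilter converges to its point, and finer filters
have more limit points. -/
structure Convergence (X : Type*) where
  /-- The set of limit points of a filter. -/
  conv : Filter X → Set X
  pure_conv : ∀ x : X, x ∈ conv (pure x)
  mono : ∀ ⦃F G : Filter X⦄, F ≤ G → F.NeBot → conv G ⊆ conv F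

namespace Convergence

variable {X Y : Type*}

/-- A set is open if every (proper) filter converging to a point of it contains it. -/
def IsOpen (ξ : Convergence X) (U : Set X) : Prop :=
  ∀ F : Filter X, F.NeBot → (ξ.conv F ∩ U).Nonempty → U ∈ F

/-- A set is closed if it contains all limits of (proper) filters containing it. -/
def IsClosed (ξ : Convergence X) (C : Set X) : Prop :=
  ∀ F : Filter X, F.NeBot → C ∈ F → ξ.conv F ⊆ C

/-- A convergence space is connected if its only clopen subsets are trivial. -/
def ConnSpace (ξ : Convergence X) : Prop :=
  ∀ U : Set X, ξ.IsOpen U → ξ.IsClosed U → U = ∅ ∨ U = Set.univ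

/-- The induced (subspace) convergence on a subset. -/
def subConv (ξ : Convergence X) (A : Set X) : Convergence A where
  conv F := {a | (a : X) ∈ ξ.conv (F.map Subtype.val)}
  pure_conv a := by simpa using ξ.pure_conv (a : X)
  mono F G h hF a ha := by
    haveI := hF
    exact ξ.mono (Filter.map_mono h) Filter.map_neBot ha

/-- A subset of a convergence space is connected if it is connected as a subspace. -/
def ConnSet (ξ : Convergence X) (A : Set X) : Prop :=
  (ξ.subConv A).ConnSpace

/-- The (principal) adherence of a set: all limits of proper filters containing it. -/
def adh (ξ : Convergence X) (A : Set X) : Set X :=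
  {x | ∃ G : Filter X, G.NeBot ∧ A ∈ G ∧ x ∈ ξ.conv G}

/-- The order on convergences: `σ ≤ τ` (σ is coarser than τ) iff every limit for τ
is a limit for σ. -/
def le (σ τ : Convergence X) : Prop :=
  ∀ F : Filter X, F.NeBot → τ.conv F ⊆ σ.conv F

/-- The reciprocal modification: same convergence except on principal ultrafilters,
where `t ∈ lim_{rξ} {x}↑` iff `t ∈ lim_ξ {x}↑` or `x ∈ lim_ξ {t}↑`. -/
def rMod (ξ : Convergence X) : Convergence X where
  conv F := {t | t ∈ ξ.conv F ∨ ∃ x : X, F = pure x ∧ x ∈ ξ.conv (pure t)}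
  pure_conv x := Or.inl (ξ.pure_conv x)
  mono := by
    rintro F G h hF t (ht | ⟨x, rfl, hx⟩)
    · exact Or.inl (ξ.mono h hF ht)
    · have hFx : F = pure x := by
        refine le_antisymm h fun s hs => ?_
        have h1 : {x} ∈ F := le_pure_iff.mp h
        obtain ⟨y, hy⟩ := hF.nonempty_of_mem (inter_mem hs h1)
        have : y = x := hy.2
        subst this
        exact mem_pure.mpr hy.1
      exact Or.inr ⟨x, hFx, hx⟩

/-- The topological modification: the topology whose open sets are the ξ-open sets. -/
def topMod (ξ : Convergence X) : TopologicalSpace X where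
  IsOpen := ξ.IsOpen
  isOpen_univ := fun _ _ _ => univ_mem
  isOpen_inter := fun U V hU hV F hF ⟨x, hx⟩ =>
    inter_mem (hU F hF ⟨x, hx.1, hx.2.1⟩) (hV F hF ⟨x, hx.1, hx.2.2⟩)
  isOpen_sUnion := fun S hS F hF ⟨x, hx⟩ => by
    obtain ⟨U, hUS, hxU⟩ := hx.2
    exact mem_of_superset (hS U hUS F hF ⟨x, hx.1, hxU⟩) (subset_sUnion_of_mem hUS)

/-- The pretopological modification `S₀ξ`. -/
def preMod (ξ : Convergence X) : Convergence X where
  conv F := ⋂ A ∈ {H : Set X | ∀ S ∈ F, (H ∩ S).Nonempty}, ξ.adh A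
  pure_conv x := by
    simp only [Set.mem_iInter]
    intro A hA
    obtain ⟨y, hy⟩ := hA {x} (by simp)
    have : x ∈ A := by
      have : y = x := hy.2
      subst this; exact hy.1
    exact ⟨pure x, by infer_instance, mem_pure.mpr this, ξ.pure_conv x⟩
  mono := by
    intro F G h _ t ht
    simp only [Set.mem_iInter] at ht ⊢
    intro A hA
    exact ht A fun S hS => hA S (h hS)

/-- The convergence associated with a topology. -/
def ofTop (t : TopologicalSpace X) : Convergence X where
  conv F := {x | F ≤ @nhds X t x}
  pure_conv x := @pure_le_nhds X t x
  mono _ _ h _ _ hx := le_trans h hx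

/-- `A` is a `T`-subspace when the topological modification of the subspace convergence
is the subspace topology of the topological modification. -/
def TSubspace (ξ : Convergence X) (A : Set X) : Prop :=
  (ξ.subConv A).topMod = TopologicalSpace.induced (Subtype.val : A → X) ξ.topMod

/-- The dual Alexandroff adherence `adh_{ξ*}`. -/
def adhStar (ξ : Convergence X) (A : Set X) : Set X :=
  {t | (ξ.conv (pure t) ∩ A).Nonempty}

/-- Iterated adherence (for an arbitrary adherence-like operator), by transfinite
recursion: `iterAdh f A 0 = A` and `iterAdh f A α = f (⋃_{β<α} iterAdh f A β)`. -/
noncomputable def iterAdh (f : Set X → Set X) (A : Set X) : Ordinal → Set X :=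
  Ordinal.lt_wf.fix fun α ih =>
    if α = 0 then A else f (⋃ β : {β : Ordinal // β < α}, ih β.1 β.2)

/-- Continuity of maps between convergence spaces. -/
def Continuous (ξ : Convergence X) (τ : Convergence Y) (f : X → Y) : Prop :=
  ∀ F : Filter X, F.NeBot → ∀ x ∈ ξ.conv F, f x ∈ τ.conv (F.map f)

end Convergence

section Aux
open Convergence
variable {X : Type*} (ξ : Convergence X)

lemma aux_compl_closed {U : Set X} (h : ξ.IsOpen U) : ξ.IsClosed Uᶜ := by
  intro F hF hUc y hy
  by_contra hyU
  rw [Set.mem_compl_iff, not_not] at hyU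
  have hUF := h F hF ⟨y, hy, hyU⟩
  have : (∅ : Set X) ∈ F := by simpa using Filter.inter_mem hUF hUc
  exact hF.ne (Filter.empty_mem_iff_bot.mp this)

lemma aux_compl_open {C : Set X} (h : ξ.IsClosed C) : ξ.IsOpen Cᶜ := by
  intro F hF hne
  obtain ⟨y, hyc, hyC⟩ := hne
  by_contra hcc
  have hne2 : (F ⊓ 𝓟 C).NeBot := by
    rw [Filter.neBot_iff, ne_eq, Filter.inf_principal_eq_bot]
    exact hcc
  have h1 : ξ.conv F ⊆ ξ.conv (F ⊓ 𝓟 C) := ξ.mono inf_le_left hne2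
  have h2 := h (F ⊓ 𝓟 C) hne2 (Filter.mem_inf_of_right (Filter.mem_principal_self C))
  exact hyC (h2 (h1 hyc))

lemma aux_restrict_open {A S : Set X} (hAS : A ⊆ S) {U : Set S}
    (h : (ξ.subConv S).IsOpen U) : (ξ.subConv A).IsOpen (Set.inclusion hAS ⁻¹' U) := by
  intro F hF hne
  haveI := hF
  obtain ⟨a, ha, haU⟩ := hne
  have hmap : (F.map (Set.inclusion hAS)).map Subtype.val = F.map Subtype.val := by
    rw [Filter.map_map]; rfl
  have hc : Set.inclusion hAS a ∈ (ξ.subConv S).conv (F.map (Set.inclusion hAS)) := by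
    show _ ∈ ξ.conv _
    rw [hmap]; exact ha
  exact Filter.mem_map.mp (h _ Filter.map_neBot ⟨_, hc, haU⟩)

lemma aux_restrict_closed {A S : Set X} (hAS : A ⊆ S) {U : Set S}
    (h : (ξ.subConv S).IsClosed U) : (ξ.subConv A).IsClosed (Set.inclusion hAS ⁻¹' U) := by
  intro F hF hV a ha
  haveI := hF
  have hmap : (F.map (Set.inclusion hAS)).map Subtype.val = F.map Subtype.val := by
    rw [Filter.map_map]; rfl
  have hc : Set.inclusion hAS a ∈ (ξ.subConv S).conv (F.map (Set.inclusion hAS)) := by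
    show _ ∈ ξ.conv _
    rw [hmap]; exact ha
  exact h _ Filter.map_neBot (Filter.mem_map.mpr hV) hc

lemma aux_key {A S : Set X} (hAS : A ⊆ S) {U : Set S}
    (hUc : (ξ.subConv S).IsClosed U)
    (hAU : ∀ a : X, (ha : a ∈ A) → (⟨a, hAS ha⟩ : S) ∈ U)
    {x : X} (hx : x ∈ ξ.adh A) (hxS : x ∈ S) : (⟨x, hxS⟩ : S) ∈ U := by
  obtain ⟨G, hG, hAG, hxG⟩ := hx
  set F := Filter.comap (Subtype.val : S → X) G with hFdef
  haveI hFne : F.NeBot := by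
    rw [hFdef, Filter.comap_neBot_iff]
    intro t ht
    obtain ⟨y, hyA, hyt⟩ := hG.nonempty_of_mem (Filter.inter_mem hAG ht)
    exact ⟨⟨y, hAS hyA⟩, hyt⟩
  have hUF : U ∈ F := by
    refine ⟨A, hAG, ?_⟩
    intro s hs
    exact hAU s.1 hs
  have hconv : (⟨x, hxS⟩ : S) ∈ (ξ.subConv S).conv F := by
    show x ∈ ξ.conv (F.map Subtype.val)
    exact ξ.mono Filter.map_comap_le Filter.map_neBot hxG
  exact hUc F hFne hUF hconv

lemma aux_conn {A B : Set X} (hA : A.Nonempty) (hconn : ξ.ConnSet A)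
    (hAB : A ⊆ B) (hadh : ∀ y ∈ B, y ∈ ξ.adh A) : ξ.ConnSet B := by
  intro U hUo hUc
  rcases hconn (Set.inclusion hAB ⁻¹' U) (aux_restrict_open ξ hAB hUo)
      (aux_restrict_closed ξ hAB hUc) with hV | hV
  · left
    rw [Set.eq_empty_iff_forall_notMem]
    intro s hsU
    have hAUc : ∀ a : X, (ha : a ∈ A) → (⟨a, hAB ha⟩ : B) ∈ Uᶜ := by
      intro a ha hmem
      have h2 : (⟨a, ha⟩ : A) ∈ Set.inclusion hAB ⁻¹' U := hmem
      rw [hV] at h2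
      exact h2
    have := aux_key ξ hAB (aux_compl_closed _ hUo) hAUc (hadh s.1 s.2) s.2
    exact this hsU
  · right
    rw [Set.eq_univ_iff_forall]
    intro s
    have hAU : ∀ a : X, (ha : a ∈ A) → (⟨a, hAB ha⟩ : B) ∈ U := by
      intro a ha
      have : (⟨a, ha⟩ : A) ∈ Set.inclusion hAB ⁻¹' U := by rw [hV]; trivial
      exact this
    exact aux_key ξ hAB hUc hAU (hadh s.1 s.2) s.2

end Aux

open Convergence in
/-- In a T₁ convergence space, the enclosure of a nonempty connected set `A` is
`adh_ξ A`; in particular `cl_ξ A` encloses `A` iff `adh_ξ A = cl_ξ A`. -/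
theorem enclosure_eq_adh_of_T1 {X : Type*} (ξ : Convergence X)
    (hT1 : ∀ x : X, ξ.IsClosed {x}) {A : Set X} (hA : A.Nonempty)
    (hconn : ξ.ConnSet A) :
    {x : X | ξ.ConnSet (A ∪ {x})} = ξ.adh A ∧
      ((∀ B : Set X, A ⊆ B → B ⊆ @closure X ξ.topMod A → ξ.ConnSet B) ↔
        ξ.adh A = @closure X ξ.topMod A) := by
  have hmain : {x : X | ξ.ConnSet (A ∪ {x})} = ξ.adh A := by
    ext x
    simp only [Set.mem_setOf_eq]
    constructor
    · intro hc
      by_cases hxA : x ∈ A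
      · exact ⟨pure x, by infer_instance, hxA, ξ.pure_conv x⟩
      · by_contra hx
        have hxS : x ∈ A ∪ {x} := Set.mem_union_right _ rfl
        set S := A ∪ ({x} : Set X) with hSdef
        set x' : S := ⟨x, hxS⟩ with hx'def
        have hclosed : (ξ.subConv S).IsClosed {x'} := by
          intro F hF hxF s hs
          haveI := hF
          have h1 : ({x} : Set X) ∈ F.map Subtype.val := by
            refine Filter.mem_map.mpr (Filter.mem_of_superset hxF ?_)
            rintro t ht
            rw [Set.mem_singleton_iff] at ht
            subst ht
            rfl
          have h2 := hT1 x (F.map Subtype.val) Filter.map_neBot h1 hs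
          exact Set.mem_singleton_iff.mpr (Subtype.ext h2)
        have hopen : (ξ.subConv S).IsOpen {x'} := by
          intro F hF hne
          obtain ⟨s, hsc, hsx⟩ := hne
          rw [Set.mem_singleton_iff] at hsx
          subst hsx
          by_contra hnF
          haveI hne2 : (F ⊓ 𝓟 ({x'}ᶜ)).NeBot := by
            rw [Filter.neBot_iff, ne_eq, Filter.inf_principal_eq_bot, compl_compl]
            exact hnF
          refine hx ⟨(F ⊓ 𝓟 ({x'}ᶜ)).map Subtype.val, Filter.map_neBot, ?_, ?_⟩
          · refine Filter.mem_map.mpr (Filter.mem_of_superset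
              (Filter.mem_inf_of_right (Filter.mem_principal_self _)) ?_)
            intro t ht
            rcases t.2 with h | h
            · exact h
            · rw [Set.mem_singleton_iff] at h
              exact absurd (Set.mem_singleton_iff.mpr (Subtype.ext h : t = x')) ht
          · exact ξ.mono (Filter.map_mono inf_le_left) Filter.map_neBot hsc
        rcases hc {x'} hopen hclosed with h | h
        · have : x' ∈ ({x'} : Set S) := rfl
          rw [h] at this
          exact this
        · obtain ⟨a, ha⟩ := hA
          have : (⟨a, Set.mem_union_left _ ha⟩ : S) ∈ ({x'} : Set S) := by
            rw [h]; trivial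
          rw [Set.mem_singleton_iff] at this
          have h' : a = x := congrArg Subtype.val this
          exact hxA (h' ▸ ha)
    · intro hx
      refine aux_conn ξ hA hconn Set.subset_union_left ?_
      intro y hy
      rcases hy with h | h
      · exact ⟨pure y, by infer_instance, h, ξ.pure_conv y⟩
      · rw [Set.mem_singleton_iff] at h
        subst h
        exact hx
  have hsub : ξ.adh A ⊆ @closure X ξ.topMod A := by
    intro x hx
    obtain ⟨G, hG, hAG, hxG⟩ := hx
    letI := ξ.topMod
    rw [mem_closure_iff]
    intro o ho hxo
    have ho' : ξ.IsOpen o := ho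
    have : o ∈ G := ho' G hG ⟨x, hxG, hxo⟩
    exact hG.nonempty_of_mem (Filter.inter_mem this hAG)
  refine ⟨hmain, ?_, ?_⟩
  · intro h
    refine Set.Subset.antisymm hsub ?_
    intro x hxcl
    have hB : ξ.ConnSet (A ∪ {x}) :=
      h (A ∪ {x}) Set.subset_union_left
        (Set.union_subset (@subset_closure X ξ.topMod A)
          (Set.singleton_subset_iff.mpr hxcl))
    have : x ∈ {x : X | ξ.ConnSet (A ∪ {x})} := hB
    rwa [hmain] at this
  · intro h B hAB hBcl
    refine aux_conn ξ hA hconn hAB ?_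
    intro y hy
    rw [h]
    exact hBcl hy
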